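/- arXiv:1808.06951 — 3 statements merged into one kernel-verified Lean document; each statement's English description precedes it below -/
import Mathlib

section
/- Let π be a finitely generated abelian group. Then there is an injective group homomorphism from the second group cohomology H²(π, ℚ/ℤ) (trivial action) into Hom(π ⊗_ℤ π, ℚ/ℤ). -/
open TensorProduct

namespace Stmt5Aux

structure Ext (P : Type) (c : P → P → AddCircle (1:ℚ)) where
  fst : AddCircle (1:ℚ)
  snd : P

theorem exists_primitive {P : Type} [AddCommGroup P] (c : P → P → AddCircle (1:ℚ))
    (hsymm : ∀ x y, c x y = c y x)
    (hcoc : ∀ x y z, c y z + c x (y+z) = c (x+y) z + c x y)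
    (hzero : ∀ x, c 0 x = 0) :
    ∃ b : P → AddCircle (1:ℚ), ∀ x y, c x y = b x + b y - b (x+y) := by
  have hzero' : ∀ x, c x 0 = 0 := fun x => (hsymm x 0).trans (hzero x)
  have hcoc' : ∀ x y z, c (x+y) z = c y z + c x (y+z) - c x y := by
    intro x y z; rw [eq_sub_iff_add_eq]; exact (hcoc x y z).symm
  letI : Zero (Ext P c) := ⟨⟨0, 0⟩⟩
  letI : Add (Ext P c) := ⟨fun a b => ⟨a.1 + b.1 + c a.2 b.2, a.2 + b.2⟩⟩
  letI : Neg (Ext P c) := ⟨fun a => ⟨-a.1 - c a.2 (-a.2), -a.2⟩⟩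
  have hadd : ∀ a b : Ext P c, a + b = ⟨a.1 + b.1 + c a.2 b.2, a.2 + b.2⟩ := fun _ _ => rfl
  have hzeroE : (0 : Ext P c) = ⟨0, 0⟩ := rfl
  have hnegE : ∀ a : Ext P c, -a = ⟨-a.1 - c a.2 (-a.2), -a.2⟩ := fun _ => rfl
  letI : AddCommGroup (Ext P c) :=
    { add := (· + ·)
      zero := 0
      neg := (- ·)
      nsmul := nsmulRec
      zsmul := zsmulRec
      add_assoc := by
        rintro ⟨a, x⟩ ⟨b, y⟩ ⟨d, z⟩
        simp only [hadd]
        congr 1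
        · rw [hcoc' x y z]; abel
        · exact add_assoc x y z
      zero_add := by
        rintro ⟨a, x⟩
        simp only [hadd, hzeroE, hzero]
        simp
      add_zero := by
        rintro ⟨a, x⟩
        simp only [hadd, hzeroE, hzero']
        simp
      neg_add_cancel := by
        rintro ⟨a, x⟩
        simp only [hadd, hnegE, hzeroE]
        congr 1
        · rw [hsymm (-x) x]; abel
        · exact neg_add_cancel x
      add_comm := by
        rintro ⟨a, x⟩ ⟨b, y⟩
        simp only [hadd]
        rw [hsymm x y, add_comm x y, add_comm a b] }
  -- inclusion of AddCircle
  let i0 : AddCircle (1:ℚ) →+ Ext P c := AddMonoidHom.mk' (fun a => ⟨a, 0⟩) (by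
    intro a b; rw [hadd]; simp [hzero])
  let i : AddCircle (1:ℚ) →ₗ[ℤ] Ext P c := i0.toIntLinearMap
  have hi : Function.Injective i := by
    intro a b hab
    exact congrArg Ext.fst hab
  obtain ⟨r, hr⟩ := ((Module.Baer.of_divisible (AddCircle (1:ℚ))).injective).out i hi LinearMap.id
  refine ⟨fun x => r ⟨0, x⟩, fun x y => ?_⟩
  have e1 : (⟨0, x⟩ : Ext P c) + ⟨0, y⟩ = i (c x y) + ⟨0, x + y⟩ := by
    simp only [hadd]
    show _ = (⟨c x y + 0 + c 0 (x+y), 0 + (x+y)⟩ : Ext P c)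
    simp [hzero]
  have h2 := congrArg r e1
  rw [map_add, map_add, hr] at h2
  simp only [LinearMap.id_apply] at h2
  show c x y = r ⟨0, x⟩ + r ⟨0, y⟩ - r ⟨0, x + y⟩
  rw [eq_sub_iff_add_eq, ← h2]

open groupCohomology Multiplicative

noncomputable abbrev TrivRep (π : Type) [AddCommGroup π] : Rep ℤ (Multiplicative π) :=
  Rep.trivial ℤ (Multiplicative π) (AddCircle (1:ℚ))

variable {π : Type} [AddCommGroup π]

theorem cocycle_rel (f : cocycles₂ (TrivRep π)) (g h k : Multiplicative π) :
    f (h, k) + f (g, h * k) = f (g * h, k) + f (g, h) := by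
  have := (mem_cocycles₂_iff (A := TrivRep π) (f : Multiplicative π × Multiplicative π → AddCircle (1:ℚ))).1 f.2 g h k
  simpa [Rep.trivial_ρ_apply] using this.symm

/-- antisymmetrization -/
noncomputable def beta (f : cocycles₂ (TrivRep π)) (x y : π) : AddCircle (1:ℚ) :=
  f (ofAdd x, ofAdd y) - f (ofAdd y, ofAdd x)

theorem beta_add_left (f : cocycles₂ (TrivRep π)) (x x' y : π) :
    beta f (x + x') y = beta f x y + beta f x' y := by
  unfold beta
  rw [ofAdd_add]
  set g := ofAdd x
  set h := ofAdd x'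
  set k := ofAdd y
  have e1 : f (g*h, k) = f (h, k) + f (g, h*k) - f (g, h) := by
    rw [eq_sub_iff_add_eq]; exact (cocycle_rel f g h k).symm
  have e2 : f (k, g*h) = f (k*g, h) + f (k, g) - f (g, h) := by
    rw [eq_sub_iff_add_eq, add_comm]; exact cocycle_rel f k g h
  have e3 : f (g, k*h) = f (g*k, h) + f (g, k) - f (k, h) := by
    rw [eq_sub_iff_add_eq, add_comm]; exact cocycle_rel f g k h
  rw [e1, e2, mul_comm h k, e3, mul_comm k g]
  abel

theorem beta_skew (f : cocycles₂ (TrivRep π)) (x y : π) : beta f x y = - beta f y x := by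
  unfold beta; rw [neg_sub]

theorem beta_add_right (f : cocycles₂ (TrivRep π)) (x y y' : π) :
    beta f x (y + y') = beta f x y + beta f x y' := by
  rw [beta_skew f x (y+y'), beta_add_left f y y' x, neg_add, ← beta_skew f x y,
    ← beta_skew f x y']

/-- the induced map on tensor products, as a linear map in the cocycle -/
noncomputable def Phi : cocycles₂ (TrivRep π) →ₗ[ℤ] ((π ⊗[ℤ] π) →ₗ[ℤ] AddCircle (1:ℚ)) where
  toFun f := TensorProduct.lift
    ((AddMonoidHom.mk' (fun x => (AddMonoidHom.mk' (beta f x) (beta_add_right f x)).toIntLinearMap)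
      (fun x x' => by ext y; exact beta_add_left f x x' y)).toIntLinearMap)
  map_add' f f' := TensorProduct.ext' fun x y => by
    erw [TensorProduct.lift.tmul, LinearMap.add_apply, TensorProduct.lift.tmul,
      TensorProduct.lift.tmul]
    show beta (f + f') x y = beta f x y + beta f' x y
    show (f (ofAdd x, ofAdd y) + f' (ofAdd x, ofAdd y)) -
      (f (ofAdd y, ofAdd x) + f' (ofAdd y, ofAdd x)) = _
    unfold beta
    abel
  map_smul' n f := TensorProduct.ext' fun x y => by
    erw [TensorProduct.lift.tmul, RingHom.id_apply n, LinearMap.smul_apply,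
      TensorProduct.lift.tmul]
    show beta (n • f) x y = n • beta f x y
    show (n • f (ofAdd x, ofAdd y)) - (n • f (ofAdd y, ofAdd x)) = _
    unfold beta
    rw [smul_sub]

theorem Phi_tmul (f : cocycles₂ (TrivRep π)) (x y : π) :
    Phi f (x ⊗ₜ[ℤ] y) = beta f x y :=
  TensorProduct.lift.tmul x y

theorem Phi_ker (f : cocycles₂ (TrivRep π)) (hf : (f : Multiplicative π × Multiplicative π → AddCircle (1:ℚ)) ∈ coboundaries₂ (TrivRep π)) :
    Phi f = 0 := by
  obtain ⟨x, hx⟩ := hf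
  have hx' : ∀ g h : Multiplicative π, x h - x (g*h) + x g = f (g, h) := by
    intro g h
    simpa [d₁₂_hom_apply, Rep.trivial_ρ_apply] using congrFun hx (g, h)
  apply TensorProduct.ext'
  intro p q
  erw [Phi_tmul, LinearMap.zero_apply]
  unfold beta
  rw [← hx' (ofAdd p) (ofAdd q), ← hx' (ofAdd q) (ofAdd p), mul_comm]
  abel

end Stmt5Aux

open Stmt5Aux groupCohomology Multiplicative in
/-- For a finitely generated abelian group `π`, there is an injective group
homomorphism `H²(π, ℚ/ℤ) → Hom(π ⊗_ℤ π, ℚ/ℤ)` (trivial action on `ℚ/ℤ`). -/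
theorem stmt5 (π : Type) [AddCommGroup π] (hfg : AddGroup.FG π) :
    ∃ f : groupCohomology.H2 (Rep.trivial ℤ (Multiplicative π) (AddCircle (1 : ℚ))) →+
      ((π ⊗[ℤ] π) →+ AddCircle (1 : ℚ)), Function.Injective f := by
  have hker : LinearMap.ker (H2π (TrivRep π)).hom ≤ LinearMap.ker (Phi (π := π)) :=
    fun f hf => LinearMap.mem_ker.2 (Phi_ker f ((H2π_eq_zero_iff f).1 (LinearMap.mem_ker.1 hf)))
  have hsurj : Function.Surjective (H2π (TrivRep π)).hom :=
    (ModuleCat.epi_iff_surjective _).1 inferInstance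
  set e := (H2π (TrivRep π)).hom.quotKerEquivOfSurjective hsurj with he
  set Φq := Submodule.liftQ (LinearMap.ker (H2π (TrivRep π)).hom) Phi hker with hΦq
  refine ⟨{ toFun := fun z => (Φq (e.symm z)).toAddMonoidHom
            map_zero' := by ext t; simp
            map_add' := by intro a b; ext t; simp }, ?_⟩
  rw [injective_iff_map_eq_zero]
  intro z hz
  obtain ⟨f, rfl⟩ := hsurj z
  show H2π _ f = 0
  rw [H2π_eq_zero_iff]
  have hzf : e.symm ((H2π (TrivRep π)).hom f) = Submodule.Quotient.mk f :=
    LinearMap.quotKerEquivOfSurjective_symm_apply _ hsurj f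
  simp only [AddMonoidHom.coe_mk, ZeroHom.coe_mk, hzf] at hz
  have hβ0 : ∀ p q : π, beta f p q = 0 := by
    intro p q
    have h1 : (Φq (Submodule.Quotient.mk f)).toAddMonoidHom (p ⊗ₜ[ℤ] q) = 0 := by
      rw [hz]; rfl
    rwa [LinearMap.toAddMonoidHom_coe, hΦq, Submodule.liftQ_apply, Phi_tmul] at h1
  have hsym : ∀ g h : Multiplicative π, f (g, h) = f (h, g) := by
    intro g h
    have := hβ0 g.toAdd h.toAdd
    unfold beta at this
    simp only [ofAdd_toAdd] at this
    rwa [sub_eq_zero] at this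
  obtain ⟨b, hb⟩ := exists_primitive
    (fun p q => f (ofAdd p, ofAdd q) - f (1, 1))
    (fun p q => by simp only []; rw [hsym])
    (fun p q r => by
      simp only [ofAdd_add]
      rw [sub_add_sub_comm, sub_add_sub_comm, cocycle_rel f (ofAdd p) (ofAdd q) (ofAdd r)])
    (fun q => by
      simp only [ofAdd_zero]
      rw [cocycles₂_map_one_fst f (ofAdd q), sub_self])
  refine ⟨fun g => b g.toAdd + (show AddCircle (1:ℚ) from f (1, 1)), funext fun ⟨g, h⟩ => ?_⟩
  rw [d₁₂_hom_apply, Rep.trivial_ρ_apply]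
  have hbk : f (g, h) - f (1, 1) =
      b g.toAdd + b h.toAdd - b (g * h).toAdd := hb g.toAdd h.toAdd
  rw [sub_eq_iff_eq_add] at hbk
  rw [hbk]
  abel
end

section
/- Let π¹ and π² be groups acting trivially on ℚ/ℤ. Then H²(π¹ × π², ℚ/ℤ) is isomorphic to the direct sum H²(π¹, ℚ/ℤ) ⊕ H²(π², ℚ/ℤ) ⊕ Hom((π¹)ᵃᵇ ⊗_ℤ (π²)ᵃᵇ, ℚ/ℤ), where (−)ᵃᵇ denotes abelianization. -/
open TensorProduct

open groupCohomology


set_option synthInstance.maxHeartbeats 1000000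
set_option maxHeartbeats 2000000

namespace Stmt6Aux
noncomputable section

variable {V : Type} [AddCommGroup V]

/-- 2-cocycles as a submodule -/
abbrev twoCocycles {G : Type} [Group G] (A : Rep ℤ G) := groupCohomology.cocycles₂ A

/-- 2-coboundaries inside the 2-cocycles -/
abbrev twoCoboundaries {G : Type} [Group G] (A : Rep ℤ G) : Submodule ℤ (twoCocycles A) :=
  AddSubgroup.toIntSubmodule ((coboundaries₂ A).toAddSubgroup.comap
    (AddMonoidHom.mk' (fun x : twoCocycles A => (x : G × G → A)) (fun _ _ => rfl)))

/-- H2 as a quotient -/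
abbrev H2q {G : Type} [Group G] (A : Rep ℤ G) := twoCocycles A ⧸ twoCoboundaries A

/-- comparison with Mathlib's H2 -/
def h2equiv {G : Type} [Group G] (A : Rep ℤ G) : groupCohomology.H2 A ≃+ H2q A :=
  (QuotientAddGroup.quotientKerEquivOfSurjective (H2π A).hom.toAddMonoidHom (by
    intro x
    induction x using H2_induction_on with
    | h y => exact ⟨y, rfl⟩)).symm.trans
    (QuotientAddGroup.quotientAddEquivOfEq (by ext x; exact H2π_eq_zero_iff x))

section Single
variable {G : Type} [Group G]

theorem mem_triv_iff (f : G × G → V) :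
    f ∈ twoCocycles (Rep.trivial ℤ G V) ↔
      ∀ g h j : G, f (g * h, j) + f (g, h) = f (h, j) + f (g, h * j) := by
  rw [mem_cocycles₂_iff]
  simp only [Rep.trivial_ρ_apply, Representation.trivial_apply]

theorem mem_cob_iff (f : twoCocycles (Rep.trivial ℤ G V)) :
    f ∈ twoCoboundaries (Rep.trivial ℤ G V) ↔
      ∃ x : G → V, ∀ g h : G, x h - x (g * h) + x g = f (g, h) := by
  rw [show f ∈ twoCoboundaries _ ↔ f.1 ∈ coboundaries₂ (Rep.trivial ℤ G V) from Iff.rfl]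
  simp only [Representation.trivial_apply, coboundaries₂, LinearMap.mem_range, funext_iff, d₁₂_hom_apply, Prod.forall,
    Rep.trivial_ρ_apply]
  rfl

/-- value of a cocycle, in `V` -/
def vl {G : Type} [Group G] (c : twoCocycles (Rep.trivial ℤ G V)) (p : G × G) : V := c p

theorem ab_surj (z : Additive (Abelianization G)) :
    ∃ x : G, Additive.ofMul (Abelianization.of x) = z := by
  obtain ⟨x, hx⟩ := Quotient.exists_rep (Additive.toMul z)
  exact ⟨x, congrArg Additive.ofMul hx⟩

theorem cocycle_one_fst (f : twoCocycles (Rep.trivial ℤ G V)) (g : G) :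
    f (1, g) = f (1, 1) := cocycles₂_map_one_fst f g

theorem cocycle_one_snd (f : twoCocycles (Rep.trivial ℤ G V)) (g : G) :
    f (g, 1) = f (1, 1) := by
  have := cocycles₂_map_one_snd f g
  rwa [Rep.trivial_ρ_apply] at this

end Single

variable {G₁ G₂ : Type} [Group G₁] [Group G₂]

/-- extensionality for AddMonoidHoms out of the tensor product of abelianizations -/
theorem tensor_hom_ext {M : Type} [AddCommMonoid M]
    {φ ψ : Additive (Abelianization G₁) ⊗[ℤ] Additive (Abelianization G₂) →+ M}
    (h : ∀ (x : G₁) (y : G₂),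
      φ (Additive.ofMul (Abelianization.of x) ⊗ₜ[ℤ] Additive.ofMul (Abelianization.of y)) =
      ψ (Additive.ofMul (Abelianization.of x) ⊗ₜ[ℤ] Additive.ofMul (Abelianization.of y))) :
    φ = ψ := by
  ext z
  induction z using TensorProduct.induction_on with
  | zero => simp
  | tmul m n =>
      obtain ⟨x, rfl⟩ := ab_surj m
      obtain ⟨y, rfl⟩ := ab_surj n
      exact h x y
  | add a b ha hb => simp [ha, hb]

local notation "AA" => Rep.trivial ℤ (G₁ × G₂) V

/-- the commutator pairing of a 2-cocycle on a product group -/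
def Bfun (f : twoCocycles (AA)) (x : G₁) (y : G₂) : V :=
  f ((1, y), (x, 1)) - f ((x, 1), (1, y))

theorem hcoc (f : twoCocycles (AA)) : ∀ g h j : G₁ × G₂,
    f (g * h, j) + f (g, h) = f (h, j) + f (g, h * j) :=
  (mem_triv_iff (G := G₁ × G₂) (fun p => f p)).1 f.2

theorem hcoc' (f : twoCocycles (AA)) (g h j : G₁ × G₂) :
    vl f (g * h, j) + vl f (g, h) = vl f (h, j) + vl f (g, h * j) := hcoc f g h j

theorem Bfun_mul_left (f : twoCocycles (AA)) (x x' : G₁) (y : G₂) :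
    Bfun f (x * x') y = Bfun f x y + Bfun f x' y := by
  have e1 := hcoc f (x, 1) (x', 1) (1, y)
  have e2 := hcoc f (x, 1) (1, y) (x', 1)
  have e3 := hcoc f (1, y) (x, 1) (x', 1)
  simp only [Prod.mk_mul_mk, one_mul, mul_one] at e1 e2 e3
  unfold Bfun
  linear_combination (norm := abel) -e1 + e2 - e3

theorem Bfun_mul_right (f : twoCocycles (AA)) (x : G₁) (y y' : G₂) :
    Bfun f x (y * y') = Bfun f x y + Bfun f x y' := by
  have e1 := hcoc f (1, y) (1, y') (x, 1)
  have e2 := hcoc f (1, y) (x, 1) (1, y')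
  have e3 := hcoc f (x, 1) (1, y) (1, y')
  simp only [Prod.mk_mul_mk, one_mul, mul_one] at e1 e2 e3
  unfold Bfun
  linear_combination (norm := abel) e1 - e2 + e3

/-- shorthand for generators of the tensor product -/
def gen (x : G₁) (y : G₂) :
    Additive (Abelianization G₁) ⊗[ℤ] Additive (Abelianization G₂) :=
  Additive.ofMul (Abelianization.of x) ⊗ₜ[ℤ] Additive.ofMul (Abelianization.of y)

theorem gen_mul_left (x x' : G₁) (y : G₂) :
    gen (G₁ := G₁) (G₂ := G₂) (x * x') y = gen x y + gen x' y := by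
  unfold gen
  simp only [map_mul, ofMul_mul, TensorProduct.add_tmul]

theorem gen_mul_right (x : G₁) (y y' : G₂) :
    gen (G₁ := G₁) (G₂ := G₂) x (y * y') = gen x y + gen x y' := by
  unfold gen
  simp only [map_mul, ofMul_mul, TensorProduct.tmul_add]

theorem gen_one_left (y : G₂) : gen (G₁ := G₁) 1 y = 0 := by
  unfold gen
  simp only [map_one, ofMul_one, TensorProduct.zero_tmul]

theorem gen_one_right (x : G₁) : gen (G₂ := G₂) x 1 = 0 := by
  unfold gen
  simp only [map_one, ofMul_one, TensorProduct.tmul_zero]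

/-- pairing as hom in the second variable -/
def pairAux2 (f : twoCocycles (AA)) (x : G₁) : Additive (Abelianization G₂) →+ V :=
  MonoidHom.toAdditiveLeft
    (Abelianization.lift (MonoidHom.mk' (fun y => Multiplicative.ofAdd (Bfun f x y))
      (fun y y' => by simp only [Bfun_mul_right, ofAdd_add])))

theorem pairAux2_apply (f : twoCocycles (AA)) (x : G₁) (y : G₂) :
    pairAux2 f x (Additive.ofMul (Abelianization.of y)) = Bfun f x y := rfl

theorem pairAux2_mul (f : twoCocycles (AA)) (x x' : G₁) :
    pairAux2 f (x * x') = pairAux2 f x + pairAux2 f x' := by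
  apply AddMonoidHom.ext
  intro z
  obtain ⟨y, rfl⟩ := ab_surj z
  show Bfun f (x * x') y = Bfun f x y + Bfun f x' y
  exact Bfun_mul_left f x x' y

/-- pairing as a two-variable hom -/
def pairAux1 (f : twoCocycles (AA)) :
    Additive (Abelianization G₁) →+ (Additive (Abelianization G₂) →+ V) :=
  MonoidHom.toAdditiveLeft
    (Abelianization.lift (MonoidHom.mk' (fun x => Multiplicative.ofAdd (pairAux2 f x))
      (fun x x' => by simp only [pairAux2_mul, ofAdd_add])))

theorem pairAux1_apply (f : twoCocycles (AA)) (x : G₁) (y : G₂) :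
    pairAux1 f (Additive.ofMul (Abelianization.of x)) (Additive.ofMul (Abelianization.of y)) =
      Bfun f x y := rfl

/-- pairing as a hom on the tensor product -/
def pairT (f : twoCocycles (AA)) :
    Additive (Abelianization G₁) ⊗[ℤ] Additive (Abelianization G₂) →+ V :=
  (TensorProduct.lift ((AddMonoidHom.mk' (fun m => (pairAux1 f m).toIntLinearMap)
    (fun m m' => LinearMap.ext fun n => by beta_reduce; rw [map_add]; rfl)).toIntLinearMap)).toAddMonoidHom

theorem pairT_apply (f : twoCocycles (AA)) (x : G₁) (y : G₂) :
    pairT f (Additive.ofMul (Abelianization.of x) ⊗ₜ[ℤ] Additive.ofMul (Abelianization.of y)) =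
      Bfun f x y := by
  simp only [pairT, LinearMap.toAddMonoidHom_coe, TensorProduct.lift.tmul]
  rfl

theorem pairT_gen (f : twoCocycles (AA)) (x : G₁) (y : G₂) :
    pairT f (gen x y) = vl f ((1, y), (x, 1)) - vl f ((x, 1), (1, y)) := pairT_apply f x y


/-- restriction of a cocycle on the product to the first factor -/
def res1 (f : twoCocycles (AA)) : twoCocycles (Rep.trivial ℤ G₁ V) :=
  ⟨fun p => f ((p.1, 1), (p.2, 1)), (mem_triv_iff _).2 (by
    intro g h j
    have := hcoc f (g, 1) (h, 1) (j, 1)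
    simpa only [Prod.mk_mul_mk, mul_one] using this)⟩

/-- restriction of a cocycle on the product to the second factor -/
def res2 (f : twoCocycles (AA)) : twoCocycles (Rep.trivial ℤ G₂ V) :=
  ⟨fun p => f ((1, p.1), (1, p.2)), (mem_triv_iff _).2 (by
    intro g h j
    have := hcoc f (1, g) (1, h) (1, j)
    simpa only [Prod.mk_mul_mk, mul_one, one_mul] using this)⟩

theorem res1_apply (f : twoCocycles (AA)) (g h : G₁) :
    vl (res1 f) (g, h) = vl f ((g, 1), (h, 1)) := rfl

theorem res2_apply (f : twoCocycles (AA)) (g h : G₂) :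
    vl (res2 f) (g, h) = vl f ((1, g), (1, h)) := rfl

/-- the cocycle assembled from two cocycles on the factors and a pairing -/
def combine (c₁ : twoCocycles (Rep.trivial ℤ G₁ V)) (c₂ : twoCocycles (Rep.trivial ℤ G₂ V))
    (φ : Additive (Abelianization G₁) ⊗[ℤ] Additive (Abelianization G₂) →+ V) :
    twoCocycles (AA) :=
  ⟨fun p => vl c₁ (p.1.1, p.2.1) + vl c₂ (p.1.2, p.2.2) + φ (gen p.2.1 p.1.2),
   (mem_triv_iff _).2 (by
    rintro ⟨g₁, g₂⟩ ⟨h₁, h₂⟩ ⟨j₁, j₂⟩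
    have e1 : vl c₁ (g₁ * h₁, j₁) + vl c₁ (g₁, h₁) = vl c₁ (h₁, j₁) + vl c₁ (g₁, h₁ * j₁) :=
      (mem_triv_iff (G := G₁) (vl c₁)).1 c₁.2 g₁ h₁ j₁
    have e2 : vl c₂ (g₂ * h₂, j₂) + vl c₂ (g₂, h₂) = vl c₂ (h₂, j₂) + vl c₂ (g₂, h₂ * j₂) :=
      (mem_triv_iff (G := G₂) (vl c₂)).1 c₂.2 g₂ h₂ j₂
    have e3 : φ (gen j₁ (g₂ * h₂)) + φ (gen h₁ g₂) =
        φ (gen j₁ h₂) + φ (gen (h₁ * j₁) g₂) := by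
      rw [gen_mul_right, gen_mul_left, map_add, map_add]
      abel
    simp only [Prod.mk_mul_mk]
    show vl c₁ (g₁ * h₁, j₁) + vl c₂ (g₂ * h₂, j₂) + φ (gen j₁ (g₂ * h₂)) +
        (vl c₁ (g₁, h₁) + vl c₂ (g₂, h₂) + φ (gen h₁ g₂)) =
      vl c₁ (h₁, j₁) + vl c₂ (h₂, j₂) + φ (gen j₁ h₂) +
        (vl c₁ (g₁, h₁ * j₁) + vl c₂ (g₂, h₂ * j₂) + φ (gen (h₁ * j₁) g₂))
    linear_combination (norm := abel) e1 + e2 + e3)⟩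

theorem combine_apply (c₁ : twoCocycles (Rep.trivial ℤ G₁ V))
    (c₂ : twoCocycles (Rep.trivial ℤ G₂ V))
    (φ : Additive (Abelianization G₁) ⊗[ℤ] Additive (Abelianization G₂) →+ V)
    (p : (G₁ × G₂) × (G₁ × G₂)) :
    vl (combine c₁ c₂ φ) p = vl c₁ (p.1.1, p.2.1) + vl c₂ (p.1.2, p.2.2) + φ (gen p.2.1 p.1.2) := rfl

theorem vl_add {G : Type} [Group G] (a b : twoCocycles (Rep.trivial ℤ G V)) (p : G × G) :
    vl (a + b) p = vl a p + vl b p := rfl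

theorem vl_sub {G : Type} [Group G] (a b : twoCocycles (Rep.trivial ℤ G V)) (p : G × G) :
    vl (a - b) p = vl a p - vl b p := rfl

theorem vl_zero {G : Type} [Group G] (p : G × G) :
    vl (0 : twoCocycles (Rep.trivial ℤ G V)) p = 0 := rfl

/-- the target of the decomposition -/
abbrev Htarget (G₁ G₂ V : Type) [Group G₁] [Group G₂] [AddCommGroup V] : Type :=
  H2q (Rep.trivial ℤ G₁ V) × H2q (Rep.trivial ℤ G₂ V) ×
    (Additive (Abelianization G₁) ⊗[ℤ] Additive (Abelianization G₂) →+ V)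

theorem pairT_add (f f' : twoCocycles (AA)) : pairT (f + f') = pairT f + pairT f' := by
  refine tensor_hom_ext fun x y => ?_
  show pairT (f + f') (gen x y) = pairT f (gen x y) + pairT f' (gen x y)
  rw [pairT_gen, pairT_gen, pairT_gen]
  rw [vl_add, vl_add]
  abel

/-- the forward map on cocycles -/
def forwardCoc : twoCocycles (AA) →+ Htarget G₁ G₂ V :=
  AddMonoidHom.mk' (fun f =>
    (Submodule.Quotient.mk (res1 f), Submodule.Quotient.mk (res2 f), pairT f))
    (by
      intro f f'
      refine Prod.ext ?_ (Prod.ext ?_ ?_)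
      · show Submodule.Quotient.mk (res1 (f + f')) =
          Submodule.Quotient.mk (res1 f) + Submodule.Quotient.mk (res1 f')
        rw [← Submodule.Quotient.mk_add]
        exact congrArg _ (Subtype.ext rfl)
      · show Submodule.Quotient.mk (res2 (f + f')) =
          Submodule.Quotient.mk (res2 f) + Submodule.Quotient.mk (res2 f')
        rw [← Submodule.Quotient.mk_add]
        exact congrArg _ (Subtype.ext rfl)
      · exact pairT_add f f')

theorem forwardCoc_vanish (f : twoCocycles (AA)) (hf : f ∈ twoCoboundaries (AA)) :
    forwardCoc f = 0 := by
  obtain ⟨u, hu⟩ := (mem_cob_iff f).1 hf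
  refine Prod.ext ?_ (Prod.ext ?_ ?_)
  · show Submodule.Quotient.mk (res1 f) = 0
    rw [Submodule.Quotient.mk_eq_zero]
    refine (mem_cob_iff _).2 ⟨fun g => u (g, 1), fun g h => ?_⟩
    show _ = f ((g, 1), (h, 1))
    have := hu (g, 1) (h, 1)
    simpa only [Prod.mk_mul_mk, mul_one] using this
  · show Submodule.Quotient.mk (res2 f) = 0
    rw [Submodule.Quotient.mk_eq_zero]
    refine (mem_cob_iff _).2 ⟨fun g => u (1, g), fun g h => ?_⟩
    show _ = f ((1, g), (1, h))
    have := hu (1, g) (1, h)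
    simpa only [Prod.mk_mul_mk, one_mul] using this
  · show pairT f = 0
    refine tensor_hom_ext fun x y => ?_
    show pairT f (gen x y) = (0 : Additive (Abelianization G₁) ⊗[ℤ]
      Additive (Abelianization G₂) →+ V) (gen x y)
    rw [pairT_gen]
    have h1 := hu (1, y) (x, 1)
    have h2 := hu (x, 1) (1, y)
    simp only [Prod.mk_mul_mk, mul_one, one_mul] at h1 h2
    show vl f ((1, y), (x, 1)) - vl f ((x, 1), (1, y)) = 0
    unfold vl
    linear_combination (norm := abel) h2 - h1

/-- the forward map on `H2` -/
def forwardH2 : H2q (AA) →ₗ[ℤ] Htarget G₁ G₂ V :=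
  Submodule.liftQ _ (forwardCoc.toIntLinearMap) (by
    intro f hf
    simpa only [LinearMap.mem_ker, AddMonoidHom.coe_toIntLinearMap] using forwardCoc_vanish f hf)

theorem forwardH2_mk (f : twoCocycles (AA)) :
    forwardH2 (V := V) (G₁ := G₁) (G₂ := G₂) (Submodule.Quotient.mk f) = forwardCoc f := rfl

theorem vl_one_fst {G : Type} [Group G] (c : twoCocycles (Rep.trivial ℤ G V)) (g : G) :
    vl c (1, g) = vl c (1, 1) := cocycle_one_fst c g

theorem vl_one_snd {G : Type} [Group G] (c : twoCocycles (Rep.trivial ℤ G V)) (g : G) :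
    vl c (g, 1) = vl c (1, 1) := cocycle_one_snd c g

theorem combine_split (c₁ : twoCocycles (Rep.trivial ℤ G₁ V))
    (c₂ : twoCocycles (Rep.trivial ℤ G₂ V))
    (φ : Additive (Abelianization G₁) ⊗[ℤ] Additive (Abelianization G₂) →+ V) :
    combine c₁ c₂ φ = combine c₁ 0 0 + combine 0 c₂ 0 + combine 0 0 φ := by
  ext g h
  show vl (combine c₁ c₂ φ) (g, h) =
    vl (combine c₁ 0 0 + combine 0 c₂ 0 + combine 0 0 φ) (g, h)
  rw [vl_add, vl_add, combine_apply, combine_apply, combine_apply, combine_apply]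
  simp only [vl_zero, AddMonoidHom.zero_apply]
  abel

theorem combine_add2 (c₁ c₁' : twoCocycles (Rep.trivial ℤ G₁ V))
    (c₂ c₂' : twoCocycles (Rep.trivial ℤ G₂ V))
    (φ φ' : Additive (Abelianization G₁) ⊗[ℤ] Additive (Abelianization G₂) →+ V) :
    combine (c₁ + c₁') (c₂ + c₂') (φ + φ') = combine c₁ c₂ φ + combine c₁' c₂' φ' := by
  ext g h
  show vl (combine (c₁ + c₁') (c₂ + c₂') (φ + φ')) (g, h) =
    vl (combine c₁ c₂ φ + combine c₁' c₂' φ') (g, h)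
  rw [vl_add, combine_apply, combine_apply, combine_apply, vl_add, vl_add,
    AddMonoidHom.add_apply]
  abel

/-- first backward component, on cocycles -/
def back1Coc : twoCocycles (Rep.trivial ℤ G₁ V) →+ H2q (AA) :=
  AddMonoidHom.mk' (fun c => Submodule.Quotient.mk (combine c 0 0)) (by
    intro c c'
    rw [← Submodule.Quotient.mk_add]
    exact congrArg _ (by simpa using combine_add2 c c' (0 : twoCocycles (Rep.trivial ℤ G₂ V)) 0 0 0))

/-- second backward component, on cocycles -/
def back2Coc : twoCocycles (Rep.trivial ℤ G₂ V) →+ H2q (AA) :=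
  AddMonoidHom.mk' (fun c => Submodule.Quotient.mk (combine 0 c 0)) (by
    intro c c'
    rw [← Submodule.Quotient.mk_add]
    exact congrArg _ (by simpa using combine_add2 (0 : twoCocycles (Rep.trivial ℤ G₁ V)) 0 c c' 0 0))

theorem back1Coc_vanish (c : twoCocycles (Rep.trivial ℤ G₁ V))
    (hc : c ∈ twoCoboundaries (Rep.trivial ℤ G₁ V)) : back1Coc (G₂ := G₂) c = 0 := by
  obtain ⟨u, hu⟩ := (mem_cob_iff c).1 hc
  show Submodule.Quotient.mk (combine c 0 0) = 0
  rw [Submodule.Quotient.mk_eq_zero]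
  refine (mem_cob_iff _).2 ⟨fun p => u p.1, ?_⟩
  rintro ⟨g₁, g₂⟩ ⟨h₁, h₂⟩
  show u h₁ - u (g₁ * h₁) + u g₁ = vl (combine c 0 0) ((g₁, g₂), (h₁, h₂))
  rw [combine_apply]
  simp only [vl_zero, AddMonoidHom.zero_apply, add_zero]
  exact hu g₁ h₁

theorem back2Coc_vanish (c : twoCocycles (Rep.trivial ℤ G₂ V))
    (hc : c ∈ twoCoboundaries (Rep.trivial ℤ G₂ V)) : back2Coc (G₁ := G₁) c = 0 := by
  obtain ⟨u, hu⟩ := (mem_cob_iff c).1 hc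
  show Submodule.Quotient.mk (combine 0 c 0) = 0
  rw [Submodule.Quotient.mk_eq_zero]
  refine (mem_cob_iff _).2 ⟨fun p => u p.2, ?_⟩
  rintro ⟨g₁, g₂⟩ ⟨h₁, h₂⟩
  show u h₂ - u (g₂ * h₂) + u g₂ = vl (combine 0 c 0) ((g₁, g₂), (h₁, h₂))
  rw [combine_apply]
  simp only [vl_zero, AddMonoidHom.zero_apply, add_zero, zero_add]
  exact hu g₂ h₂

/-- first backward component -/
def back1 : H2q (Rep.trivial ℤ G₁ V) →ₗ[ℤ] H2q (AA) :=
  Submodule.liftQ _ (back1Coc (G₂ := G₂)).toIntLinearMap (fun c hc => by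
    simpa only [LinearMap.mem_ker, AddMonoidHom.coe_toIntLinearMap] using back1Coc_vanish c hc)

/-- second backward component -/
def back2 : H2q (Rep.trivial ℤ G₂ V) →ₗ[ℤ] H2q (AA) :=
  Submodule.liftQ _ (back2Coc (G₁ := G₁)).toIntLinearMap (fun c hc => by
    simpa only [LinearMap.mem_ker, AddMonoidHom.coe_toIntLinearMap] using back2Coc_vanish c hc)

/-- third backward component -/
def back3 : (Additive (Abelianization G₁) ⊗[ℤ] Additive (Abelianization G₂) →+ V) →+ H2q (AA) :=
  AddMonoidHom.mk' (fun φ => Submodule.Quotient.mk (combine 0 0 φ)) (by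
    intro φ φ'
    rw [← Submodule.Quotient.mk_add]
    exact congrArg _ (by simpa using combine_add2 0 0 0 0 φ φ'))

/-- the backward map -/
def backward : Htarget G₁ G₂ V →+ H2q (AA) :=
  AddMonoidHom.mk' (fun t => back1 (V := V) (G₁ := G₁) (G₂ := G₂) t.1 + back2 (V := V) (G₁ := G₁) (G₂ := G₂) t.2.1 + back3 t.2.2) (by
    intro t t'
    show back1 (V := V) (G₁ := G₁) (G₂ := G₂) (t.1 + t'.1) + back2 (V := V) (G₁ := G₁) (G₂ := G₂) (t.2.1 + t'.2.1) + back3 (t.2.2 + t'.2.2) = _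
    rw [map_add, map_add, map_add]
    abel)

theorem backward_mk (c₁ : twoCocycles (Rep.trivial ℤ G₁ V))
    (c₂ : twoCocycles (Rep.trivial ℤ G₂ V))
    (φ : Additive (Abelianization G₁) ⊗[ℤ] Additive (Abelianization G₂) →+ V) :
    backward (Submodule.Quotient.mk c₁, Submodule.Quotient.mk c₂, φ) =
      Submodule.Quotient.mk (combine c₁ c₂ φ) := by
  show back1 (V := V) (G₁ := G₁) (G₂ := G₂) (Submodule.Quotient.mk c₁) + back2 (V := V) (G₁ := G₁) (G₂ := G₂) (Submodule.Quotient.mk c₂) + back3 φ = _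
  have e1 : back1 (V := V) (G₁ := G₁) (G₂ := G₂) (Submodule.Quotient.mk c₁) =
      Submodule.Quotient.mk (combine c₁ 0 0) := rfl
  have e2 : back2 (V := V) (G₁ := G₁) (G₂ := G₂) (Submodule.Quotient.mk c₂) =
      Submodule.Quotient.mk (combine 0 c₂ 0) := rfl
  have e3 : back3 φ = Submodule.Quotient.mk (combine 0 0 φ) := rfl
  rw [e1, e2, e3, ← Submodule.Quotient.mk_add, ← Submodule.Quotient.mk_add]
  exact congrArg _ (combine_split c₁ c₂ φ).symm

theorem right_inv_aux (w : Htarget G₁ G₂ V) : forwardH2 (V := V) (G₁ := G₁) (G₂ := G₂) (backward w) = w := by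
  obtain ⟨a, b, φ⟩ := w
  obtain ⟨c₁, rfl⟩ := Submodule.Quotient.mk_surjective _ a
  obtain ⟨c₂, rfl⟩ := Submodule.Quotient.mk_surjective _ b
  rw [backward_mk, forwardH2_mk]
  refine Prod.ext ?_ (Prod.ext ?_ ?_)
  · show Submodule.Quotient.mk (res1 (combine c₁ c₂ φ)) = Submodule.Quotient.mk c₁
    rw [Submodule.Quotient.eq]
    refine (mem_cob_iff _).2 ⟨fun _ => vl c₂ (1, 1), fun g h => ?_⟩
    show vl c₂ (1, 1) - vl c₂ (1, 1) + vl c₂ (1, 1) =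
      vl (res1 (combine c₁ c₂ φ) - c₁) (g, h)
    rw [vl_sub, res1_apply]
    show _ = vl (combine c₁ c₂ φ) ((g, 1), (h, 1)) - vl c₁ (g, h)
    rw [combine_apply]
    show _ = vl c₁ (g, h) + vl c₂ (1, 1) + φ (gen h 1) - vl c₁ (g, h)
    rw [gen_one_right, map_zero]
    abel
  · show Submodule.Quotient.mk (res2 (combine c₁ c₂ φ)) = Submodule.Quotient.mk c₂
    rw [Submodule.Quotient.eq]
    refine (mem_cob_iff _).2 ⟨fun _ => vl c₁ (1, 1), fun g h => ?_⟩
    show vl c₁ (1, 1) - vl c₁ (1, 1) + vl c₁ (1, 1) =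
      vl (res2 (combine c₁ c₂ φ) - c₂) (g, h)
    rw [vl_sub, res2_apply]
    show _ = vl (combine c₁ c₂ φ) ((1, g), (1, h)) - vl c₂ (g, h)
    rw [combine_apply]
    show _ = vl c₁ (1, 1) + vl c₂ (g, h) + φ (gen 1 g) - vl c₂ (g, h)
    rw [gen_one_left, map_zero]
    abel
  · show pairT (combine c₁ c₂ φ) = φ
    refine tensor_hom_ext fun x y => ?_
    show pairT (combine c₁ c₂ φ) (gen x y) = φ (gen x y)
    rw [pairT_gen, combine_apply, combine_apply]
    show vl c₁ (1, x) + vl c₂ (y, 1) + φ (gen x y) -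
      (vl c₁ (x, 1) + vl c₂ (1, y) + φ (gen 1 1)) = φ (gen x y)
    rw [gen_one_left, map_zero, vl_one_fst c₁ x, vl_one_snd c₁ x, vl_one_fst c₂ y,
      vl_one_snd c₂ y]
    abel

theorem left_inv_aux (z : H2q (AA)) : backward (forwardH2 (V := V) (G₁ := G₁) (G₂ := G₂) z) = z := by
  obtain ⟨f, rfl⟩ := Submodule.Quotient.mk_surjective _ z
  rw [forwardH2_mk]
  show backward (Submodule.Quotient.mk (res1 f), Submodule.Quotient.mk (res2 f), pairT f) =
    Submodule.Quotient.mk f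
  rw [backward_mk, Submodule.Quotient.eq]
  refine (mem_cob_iff _).2 ⟨fun p => vl f ((p.1, 1), (1, p.2)), ?_⟩
  rintro ⟨g₁, g₂⟩ ⟨h₁, h₂⟩
  have h1 := hcoc' f (g₁, 1) (1, g₂) (h₁, h₂)
  have h2 := hcoc' f (1, g₂) (h₁, 1) (1, h₂)
  have h3 := hcoc' f (g₁, 1) (h₁, 1) (1, g₂ * h₂)
  have h4 := hcoc' f (h₁, 1) (1, g₂) (1, h₂)
  simp only [Prod.mk_mul_mk, one_mul, mul_one] at h1 h2 h3 h4
  show vl f ((h₁, 1), (1, h₂)) - vl f ((g₁ * h₁, 1), (1, g₂ * h₂)) + vl f ((g₁, 1), (1, g₂)) =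
    vl (combine (res1 f) (res2 f) (pairT f) - f) ((g₁, g₂), (h₁, h₂))
  rw [vl_sub, combine_apply, res1_apply, res2_apply, pairT_gen]
  linear_combination (norm := abel) h1 - h2 - h3 + h4

/-- the decomposition of `H²` of a product -/
def mainEquiv : H2q (AA) ≃+ Htarget G₁ G₂ V where
  toFun := forwardH2 (V := V) (G₁ := G₁) (G₂ := G₂)
  invFun := backward
  left_inv := left_inv_aux
  right_inv := right_inv_aux
  map_add' := map_add (forwardH2 (V := V) (G₁ := G₁) (G₂ := G₂))

end
end Stmt6Aux

/-- For groups `π¹, π²` acting trivially on `ℚ/ℤ`,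
`H²(π¹ × π², ℚ/ℤ) ≅ H²(π¹, ℚ/ℤ) ⊕ H²(π², ℚ/ℤ) ⊕ Hom((π¹)ᵃᵇ ⊗_ℤ (π²)ᵃᵇ, ℚ/ℤ)`. -/
theorem stmt6 (G₁ G₂ : Type) [Group G₁] [Group G₂] :
    Nonempty
      (groupCohomology.H2 (Rep.trivial ℤ (G₁ × G₂) (AddCircle (1 : ℚ))) ≃+
        (groupCohomology.H2 (Rep.trivial ℤ G₁ (AddCircle (1 : ℚ))) ×
         groupCohomology.H2 (Rep.trivial ℤ G₂ (AddCircle (1 : ℚ))) ×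
         ((Additive (Abelianization G₁) ⊗[ℤ] Additive (Abelianization G₂)) →+
           AddCircle (1 : ℚ)))) := by
  exact ⟨(Stmt6Aux.h2equiv _).trans ((Stmt6Aux.mainEquiv (V := AddCircle (1 : ℚ)) (G₁ := G₁)
    (G₂ := G₂)).trans (AddEquiv.prodCongr (Stmt6Aux.h2equiv _).symm
      (AddEquiv.prodCongr (Stmt6Aux.h2equiv _).symm (AddEquiv.refl _))))⟩
end

section
/- Let π ≅ ⊕_{i=1}^r ℤ/n_iℤ be a finitely generated abelian group (where n_i = 0 is allowed, meaning ℤ). Then H²(π, ℚ/ℤ) with trivial action is isomorphic to ⊕_{1 ≤ i < j ≤ r} Hom(ℤ/n_iℤ ⊗_ℤ ℤ/n_jℤ, ℚ/ℤ). -/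
open TensorProduct groupCohomology

namespace Stmt7
section Compat
variable {G : Type} [Group G]

abbrev twoCocycles (A : Rep ℤ G) := cocycles₂ A

def twoCoboundaries (A : Rep ℤ G) : Submodule ℤ (twoCocycles A) :=
  AddSubgroup.toIntSubmodule
    ((coboundaries₂ A).toAddSubgroup.comap (cocycles₂ A).subtype.toAddMonoidHom)

lemma twoCocycles.val_eq_coe {A : Rep ℤ G} (f : twoCocycles A) : f.1 = f := rfl

lemma mem_twoCocycles_iff {A : Rep ℤ G} (f : G × G → A) :
    f ∈ twoCocycles A ↔ ∀ g h j : G, f (g * h, j) + f (g, h) = A.ρ g (f (h, j)) + f (g, h * j) :=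
  mem_cocycles₂_iff f

lemma mem_twoCoboundaries_iff {A : Rep ℤ G} (f : twoCocycles A) : f ∈ twoCoboundaries A ↔
    ∃ x : G → A, ∀ g h : G, A.ρ g (x h) - x (g * h) + x g = f (g, h) := by
  show (f : G × G → A) ∈ coboundaries₂ A ↔ _
  simp only [coboundaries₂, LinearMap.mem_range, funext_iff, Prod.forall]
  rfl

lemma ker_eq (A : Rep ℤ G) :
    (twoCoboundaries A).toAddSubgroup = (H2π A).hom.toAddMonoidHom.ker := by
  ext x
  rw [AddMonoidHom.mem_ker]
  exact (H2π_eq_zero_iff x).symm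

noncomputable def H2equiv (A : Rep ℤ G) :
    (twoCocycles A ⧸ twoCoboundaries A) ≃+ groupCohomology.H2 A :=
  (QuotientAddGroup.quotientAddEquivOfEq (ker_eq A)).trans
    (QuotientAddGroup.quotientKerEquivOfSurjective _
      ((ModuleCat.epi_iff_surjective (H2π A)).1 inferInstance))

end Compat
section Generic
variable {G : Type} [CommGroup G] {M : Type} [AddCommGroup M]

local notation "A" => Rep.trivial ℤ G M

lemma coc (f : twoCocycles A) (a b c : G) :
    f (a * b, c) + f (a, b) = f (b, c) + f (a, b * c) := by
  have := (mem_twoCocycles_iff f.1).1 f.2 a b c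
  simpa [Rep.trivial_ρ_apply] using this

/-- antisymmetrization -/
def bb (f : G × G → M) (x y : G) : M := f (x, y) - f (y, x)

lemma bb_neg (f : G × G → M) (x y : G) : bb f x y = - bb f y x := by
  unfold bb; abel

lemma bb_add_right (f : twoCocycles A) (x y z : G) :
    bb f.1 x (y * z) = bb f.1 x y + bb f.1 x z := by
  have h1 := coc f x y z
  have h2 := coc f y z x
  have h3 := coc f y x z
  rw [mul_comm y x] at h3
  rw [mul_comm z x] at h2
  have e1 : f (x, y * z) = f (x * y, z) + f (x, y) - f (y, z) := by
    rw [eq_sub_iff_add_eq, add_comm (f (x, y * z)) (f (y, z))]; exact h1.symm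
  have e2 : f (y * z, x) = f (z, x) + f (y, x * z) - f (y, z) := by
    rw [eq_sub_iff_add_eq]; exact h2
  have e3 : f (x * y, z) = f (x, z) + f (y, x * z) - f (y, x) := by
    rw [eq_sub_iff_add_eq]; exact h3
  unfold bb
  simp only [twoCocycles.val_eq_coe]
  rw [e1, e2, e3]
  abel

lemma bb_add_left (f : twoCocycles A) (x y z : G) :
    bb f.1 (x * y) z = bb f.1 x z + bb f.1 y z := by
  rw [bb_neg, bb_add_right, bb_neg f.1 z x, bb_neg f.1 z y]; abel

lemma mem_twoCocycles_of_biadd (h : G × G → M)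
    (hl : ∀ x y z : G, h (x * y, z) = h (x, z) + h (y, z))
    (hr : ∀ x y z : G, h (x, y * z) = h (x, y) + h (x, z)) :
    h ∈ twoCocycles A := by
  rw [mem_twoCocycles_iff]
  intro a b c
  rw [Rep.trivial_ρ_apply, hl a b c, hr a b c]
  abel

lemma bb_of_coboundary (f : twoCocycles A) (hf : f ∈ twoCoboundaries A) (x y : G) :
    bb f.1 x y = 0 := by
  rcases (mem_twoCoboundaries_iff f).1 hf with ⟨g, hg⟩
  have h1 := hg x y
  have h2 := hg y x
  rw [Rep.trivial_ρ_apply] at h1 h2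
  rw [mul_comm y x] at h2
  unfold bb
  rw [twoCocycles.val_eq_coe, ← h1, ← h2]
  abel

end Generic
section ExtGrp
variable {G : Type} [CommGroup G] {M : Type} [AddCommGroup M]

/-- A symmetric 2-cocycle (trivial action). -/
class IsGoodCocycle (f : G × G → M) : Prop where
  coc : ∀ a b c : G, f (a * b, c) + f (a, b) = f (b, c) + f (a, b * c)
  symm : ∀ a b : G, f (a, b) = f (b, a)

variable (f : G × G → M) [IsGoodCocycle f]

lemma good_one_fst (b : G) : f (1, b) = f (1, 1) := by
  have := IsGoodCocycle.coc (f := f) 1 1 b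
  simp only [one_mul] at this
  exact (add_left_cancel this).symm

lemma good_one_snd (b : G) : f (b, 1) = f (1, 1) := by
  rw [IsGoodCocycle.symm (f := f) b 1]; exact good_one_fst f b

/-- The central extension of `G` by `M` determined by the symmetric cocycle `f`. -/
def ExtG (_f : G × G → M) : Type := G × M

instance : CommGroup (ExtG f) where
  mul x y := (⟨x.1 * y.1, x.2 + y.2 + f (x.1, y.1)⟩ : G × M)
  one := (⟨1, - f (1, 1)⟩ : G × M)
  inv x := (⟨x.1⁻¹, - x.2 - f (1, 1) - f (x.1⁻¹, x.1)⟩ : G × M)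
  mul_assoc x y z := by
    refine Prod.ext (mul_assoc _ _ _) ?_
    show x.2 + y.2 + f (x.1, y.1) + z.2 + f (x.1 * y.1, z.1)
      = x.2 + (y.2 + z.2 + f (y.1, z.1)) + f (x.1, y.1 * z.1)
    have h := IsGoodCocycle.coc (f := f) x.1 y.1 z.1
    have e : f (x.1, y.1 * z.1) = f (x.1 * y.1, z.1) + f (x.1, y.1) - f (y.1, z.1) := by
      rw [eq_sub_iff_add_eq, add_comm (f (x.1, y.1 * z.1)) (f (y.1, z.1))]; exact h.symm
    rw [e]; abel
  one_mul x := by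
    refine Prod.ext (one_mul _) ?_
    show - f (1, 1) + x.2 + f (1, x.1) = x.2
    rw [good_one_fst f x.1]; abel
  mul_one x := by
    refine Prod.ext (mul_one _) ?_
    show x.2 + - f (1, 1) + f (x.1, 1) = x.2
    rw [good_one_snd f x.1]; abel
  inv_mul_cancel x := by
    refine Prod.ext (inv_mul_cancel _) ?_
    show - x.2 - f (1, 1) - f (x.1⁻¹, x.1) + x.2 + f (x.1⁻¹, x.1) = - f (1, 1)
    abel
  mul_comm x y := by
    refine Prod.ext (mul_comm _ _) ?_
    show x.2 + y.2 + f (x.1, y.1) = y.2 + x.2 + f (y.1, x.1)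
    rw [IsGoodCocycle.symm (f := f) x.1 y.1]; abel

/-- First projection as a monoid hom. -/
def fstHom : ExtG f →* G where
  toFun x := x.1
  map_one' := rfl
  map_mul' _ _ := rfl

@[simp] lemma fstHom_apply (x : ExtG f) : fstHom f x = x.1 := rfl

lemma extG_mul_snd (x y : ExtG f) : (x * y).2 = x.2 + y.2 + f (x.1, y.1) := rfl

lemma extG_one_snd : (1 : ExtG f).2 = - f (1, 1) := rfl

end ExtGrp

section Concrete

/-- The additive group `⊕ ℤ/n_i`. -/
abbrev GG (r : ℕ) (n : Fin r → ℕ) := Multiplicative (∀ i : Fin r, ZMod (n i))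

variable {r : ℕ} {n : Fin r → ℕ}


/-- generators -/
def ee (i : Fin r) (a : ZMod (n i)) : GG r n :=
  Multiplicative.ofAdd (Pi.single i a)

lemma ee_mul (i : Fin r) (a b : ZMod (n i)) : ee i (a + b) = ee (n := n) i a * ee i b := by
  unfold ee
  rw [← ofAdd_add, Pi.single_add]

/-- an additive function `GG r n → AddCircle (1 : ℚ)` as an `AddMonoidHom` -/
def addHomOfMulAdd (β : GG r n → AddCircle (1 : ℚ)) (hβ : ∀ x y : GG r n, β (x * y) = β x + β y) :
    (∀ i : Fin r, ZMod (n i)) →+ AddCircle (1 : ℚ) where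
  toFun v := β (Multiplicative.ofAdd v)
  map_zero' := by
    have h := hβ 1 1
    rw [mul_one] at h
    exact (left_eq_add.1 h)
  map_add' x y := hβ (Multiplicative.ofAdd x) (Multiplicative.ofAdd y)

lemma gen_ext {β₁ β₂ : GG r n → AddCircle (1 : ℚ)} (h₁ : ∀ x y, β₁ (x * y) = β₁ x + β₁ y)
    (h₂ : ∀ x y, β₂ (x * y) = β₂ x + β₂ y)
    (h : ∀ (i : Fin r) (a : ZMod (n i)), β₁ (ee i a) = β₂ (ee i a)) (x : GG r n) :
    β₁ x = β₂ x := by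
  have := AddMonoidHom.functions_ext (AddCircle (1 : ℚ))
    (addHomOfMulAdd β₁ h₁) (addHomOfMulAdd β₂ h₂) (fun i a => h i a)
  exact DFunLike.congr_fun this x.toAdd

lemma mulAdd_zpow {β : GG r n → AddCircle (1 : ℚ)} (hβ : ∀ x y, β (x * y) = β x + β y) (x : GG r n) (m : ℤ) :
    β (x ^ m) = m • β x := by
  have h := map_zsmul (addHomOfMulAdd β hβ) m x.toAdd
  have e : x ^ m = Multiplicative.ofAdd (m • x.toAdd) := by
    rw [ofAdd_zsmul]; rfl
  rw [e]
  exact h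

lemma mulAdd_one {β : GG r n → AddCircle (1 : ℚ)} (hβ : ∀ x y, β (x * y) = β x + β y) : β 1 = 0 := by
  have h := hβ 1 1
  rw [mul_one] at h
  exact (left_eq_add.1 h)

lemma prod_ee (x : GG r n) : (∏ i : Fin r, ee i (x.toAdd i)) = x := by
  unfold ee
  rw [← ofAdd_sum]
  congr 1
  exact Finset.univ_sum_single x.toAdd

/-- reduction mod n, coordinatewise -/
def qq : (∀ i : Fin r, ℤ) →+ (∀ i : Fin r, ZMod (n i)) where
  toFun x i := (x i : ZMod (n i))
  map_zero' := by funext i; simp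
  map_add' x y := by funext i; simp

/-- coordinatewise lift -/
def ll (p : ∀ i : Fin r, ZMod (n i)) : ∀ i : Fin r, ℤ := fun i => (ZMod.cast (p i) : ℤ)

lemma qq_ll (p : ∀ i : Fin r, ZMod (n i)) : qq (n := n) (ll p) = p := by
  funext i
  exact ZMod.intCast_zmod_cast (p i)

lemma symm_mem_twoCoboundaries (f : twoCocycles (Rep.trivial ℤ (GG r n) (AddCircle (1 : ℚ))))
    (hs : ∀ x y : GG r n, f.1 (x, y) = f.1 (y, x)) :
    f ∈ twoCoboundaries (Rep.trivial ℤ (GG r n) (AddCircle (1 : ℚ))) := by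
  classical
  let F : (GG r n × GG r n)
      → AddCircle (1 : ℚ) := f.1
  haveI : IsGoodCocycle F := ⟨fun a b c => by exact coc f a b c, fun a b => hs a b⟩
  set c : AddCircle (1 : ℚ) := F (1, 1) with hc
  let yy : Fin r → ExtG F := fun i => (⟨ee i (1 : ZMod (n i)), (0 : AddCircle (1 : ℚ))⟩ : _ × AddCircle (1 : ℚ))
  let φ : Multiplicative (∀ i : Fin r, ℤ) →* ExtG F :=
    ∏ i : Fin r, (zpowersHom (ExtG F) (yy i)).comp
      (AddMonoidHom.toMultiplicative (Pi.evalAddMonoidHom (fun _ : Fin r => ℤ) i))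
  have phi_apply : ∀ v : ∀ i : Fin r, ℤ,
      φ (Multiplicative.ofAdd v) = ∏ i : Fin r, (yy i) ^ (v i) := by
    intro v
    rw [MonoidHom.finset_prod_apply]
    rfl
  have ee_zpow : ∀ (i : Fin r) (m : ℤ), (ee (n := n) i 1) ^ m = ee i ((m : ZMod (n i))) := by
    intro i m
    unfold ee
    rw [← ofAdd_zsmul]
    congr 1
    funext j
    rcases eq_or_ne j i with hj | hj
    · subst hj
      simp [zsmul_one]
    · simp [Pi.single_eq_of_ne hj]
  have phi_fst : ∀ v : ∀ i : Fin r, ℤ,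
      (φ (Multiplicative.ofAdd v)).1 = Multiplicative.ofAdd (qq v) := by
    intro v
    rw [phi_apply]
    have h1 : (∏ i : Fin r, (yy i) ^ (v i)).1
        = ∏ i : Fin r, ((yy i) ^ (v i)).1 := by
      rw [← fstHom_apply F, map_prod]
      rfl
    rw [h1]
    have h2 : ∀ i : Fin r, ((yy i) ^ (v i)).1 = ee i ((v i : ZMod (n i))) := by
      intro i
      rw [← fstHom_apply F, map_zpow]
      exact ee_zpow i (v i)
    rw [Finset.prod_congr rfl (fun i _ => h2 i)]
    exact prod_ee (Multiplicative.ofAdd (qq v))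
  let u : (∀ i : Fin r, ℤ) → AddCircle (1 : ℚ) := fun v => (φ (Multiplicative.ofAdd v)).2
  have u_add : ∀ v t, u (v + t) = u v + u t
      + F (Multiplicative.ofAdd (qq v), Multiplicative.ofAdd (qq t)) := by
    intro v t
    have h : φ (Multiplicative.ofAdd (v + t))
        = φ (Multiplicative.ofAdd v) * φ (Multiplicative.ofAdd t) := by
      rw [← map_mul]
      rfl
    have h2 := congrArg Prod.snd h
    rw [extG_mul_snd] at h2
    rw [phi_fst, phi_fst] at h2
    exact h2
  have u_zero : u 0 = -c := by
    have h : φ (Multiplicative.ofAdd (0 : ∀ i : Fin r, ℤ)) = 1 := map_one φ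
    have h2 := congrArg Prod.snd h
    rw [extG_one_snd] at h2
    exact h2
  -- divisibility choices
  let aa : Fin r → AddCircle (1 : ℚ) := fun i =>
    if h : (n i : ℤ) = 0 then 0
    else DivisibleBy.div (u (Pi.single i ((n i : ℤ))) + c) (n i : ℤ)
  have ha : ∀ i, (n i : ℤ) • aa i = u (Pi.single i ((n i : ℤ))) + c := by
    intro i
    by_cases h : (n i : ℤ) = 0
    · have h0 : Pi.single i ((n i : ℤ)) = (0 : ∀ i : Fin r, ℤ) := by
        rw [h, Pi.single_zero]
      have h0 : Pi.single i ((n i : ℤ)) = (0 : ∀ i : Fin r, ℤ) := by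
        rw [h]; exact Pi.single_zero i
      rw [h0, u_zero, h]
      simp
    · simp only [aa, dif_neg h]
      exact DivisibleBy.div_cancel _ h
  let w : (∀ i : Fin r, ℤ) →+ AddCircle (1 : ℚ) :=
    ∑ i : Fin r, (zmultiplesHom (AddCircle (1 : ℚ)) (aa i)).comp
      (Pi.evalAddMonoidHom (fun _ : Fin r => ℤ) i)
  have w_apply : ∀ v, w v = ∑ i : Fin r, (v i) • aa i := by
    intro v
    rw [AddMonoidHom.finset_sum_apply]
    rfl
  have qzero : ∀ v : ∀ i : Fin r, ℤ, (∀ i, (n i : ℤ) ∣ v i) → qq (n := n) v = 0 := by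
    intro v h
    funext i
    exact (ZMod.intCast_zmod_eq_zero_iff_dvd _ _).2 (h i)
  have FK : ∀ v t : ∀ i : Fin r, ℤ, (∀ i, (n i : ℤ) ∣ t i) →
      F (Multiplicative.ofAdd (qq v), Multiplicative.ofAdd (qq t)) = c := by
    intro v t ht
    rw [qzero t ht]
    exact good_one_snd F _
  -- Λ
  let Λ : (∀ i : Fin r, ℤ) →+ (∀ i : Fin r, ℤ) := {
    toFun := fun x i => (n i : ℤ) * x i,
    map_zero' := by funext i; simp,
    map_add' := fun x y => by funext i; simp [mul_add] }
  have Λdvd : ∀ x (i : Fin r), (n i : ℤ) ∣ (Λ x) i := fun x i => Dvd.intro _ rfl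
  let v' : (∀ i : Fin r, ℤ) →+ AddCircle (1 : ℚ) := {
    toFun := fun x => u (Λ x) + c
    map_zero' := by show u (Λ 0) + c = 0; rw [map_zero, u_zero]; simp
    map_add' := by
      intro x y
      show u (Λ (x + y)) + c = (u (Λ x) + c) + (u (Λ y) + c)
      rw [map_add, u_add (Λ x) (Λ y), FK _ _ (Λdvd y)]
      abel }
  have v'w : v' = w.comp Λ := by
    apply AddMonoidHom.functions_ext
    intro i x
    have hsing : Λ (Pi.single i x) = Pi.single i ((n i : ℤ) * x) := by
      funext j
      by_cases hj : j = i
      · subst hj; simp [Λ]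
      · simp [Λ, Pi.single_eq_of_ne hj]
    have hsmul : Pi.single i ((n i : ℤ) * x) = x • (Pi.single i ((n i : ℤ)) : ∀ _ : Fin r, ℤ) := by
      funext j
      rcases eq_or_ne j i with hj | hj
      · subst hj
        simp [smul_eq_mul, mul_comm]
      · simp [Pi.single_eq_of_ne hj]
    have hsing1 : Λ (Pi.single i (1 : ℤ)) = Pi.single i ((n i : ℤ)) := by
      funext j
      rcases eq_or_ne j i with hj | hj
      · subst hj; simp [Λ]
      · simp [Λ, Pi.single_eq_of_ne hj]
    have lhs : v' (Pi.single i x) = x • (u (Pi.single i ((n i : ℤ))) + c) := by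
      have h1 : (Pi.single i x : ∀ _ : Fin r, ℤ) = x • (Pi.single i (1 : ℤ) : ∀ _ : Fin r, ℤ) := by
        funext j
        rcases eq_or_ne j i with hj | hj
        · subst hj; simp
        · simp [Pi.single_eq_of_ne hj]
      rw [h1, map_zsmul]
      have h2 : v' (Pi.single i (1 : ℤ)) = u (Pi.single i ((n i : ℤ))) + c := by
        show u (Λ (Pi.single i (1 : ℤ))) + c = _
        rw [hsing1]
      rw [h2]
    rw [lhs, AddMonoidHom.comp_apply, hsing, ← ha i, w_apply, Finset.sum_eq_single i]
    · rw [Pi.single_eq_same, smul_smul, mul_comm]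
    · intro j _ hj
      rw [Pi.single_eq_of_ne hj, zero_smul]
    · intro hi
      exact absurd (Finset.mem_univ i) hi
  have uK : ∀ v, (∀ i, (n i : ℤ) ∣ v i) → u v + c = w v := by
    intro v hv
    let m : ∀ i : Fin r, ℤ := fun i => v i / (n i : ℤ)
    have hm : Λ m = v := by
      funext i
      exact Int.mul_ediv_cancel' (hv i)
    have := DFunLike.congr_fun v'w m
    rw [AddMonoidHom.comp_apply, hm] at this
    calc u v + c = v' m := by show _ = u (Λ m) + c; rw [hm]
      _ = w v := this
  let u' : (∀ i : Fin r, ℤ) → AddCircle (1 : ℚ) := fun v => u v - w v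
  have u'_add : ∀ v t, u' (v + t) = u' v + u' t
      + F (Multiplicative.ofAdd (qq v), Multiplicative.ofAdd (qq t)) := by
    intro v t
    show u (v + t) - w (v + t) = _
    rw [u_add, map_add]
    show _ = (u v - w v) + (u t - w t) + _
    abel
  have u'_K : ∀ v k, (∀ i, (n i : ℤ) ∣ k i) → u' (v + k) = u' v := by
    intro v k hk
    rw [u'_add v k, FK v k hk]
    have : u' k = -c := by
      show u k - w k = -c
      rw [← uK k hk]
      abel
    rw [this]
    abel
  -- the witness
  let gg : GG r n → AddCircle (1 : ℚ) := fun x => - u' (ll x.toAdd)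
  have key : ∀ p₁ p₂ : ∀ i : Fin r, ZMod (n i),
      F (Multiplicative.ofAdd p₁, Multiplicative.ofAdd p₂)
        = u' (ll (p₁ + p₂)) - u' (ll p₁) - u' (ll p₂) := by
    intro p₁ p₂
    have h1 := u'_add (ll p₁) (ll p₂)
    rw [qq_ll, qq_ll] at h1
    have h2 : u' (ll p₁ + ll p₂) = u' (ll (p₁ + p₂)) := by
      have hk : ∀ i, (n i : ℤ) ∣ (ll (p₁ + p₂) - (ll p₁ + ll p₂)) i := by
        intro i
        have : ((ll (p₁ + p₂) - (ll p₁ + ll p₂)) i : ZMod (n i)) = 0 := by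
          have e1 : ((ll (p₁ + p₂)) i : ZMod (n i)) = (p₁ + p₂) i :=
            congrFun (qq_ll (p₁ + p₂)) i
          have e2 : ((ll p₁) i : ZMod (n i)) = p₁ i := congrFun (qq_ll p₁) i
          have e3 : ((ll p₂) i : ZMod (n i)) = p₂ i := congrFun (qq_ll p₂) i
          rw [Pi.sub_apply, Pi.add_apply]
          push_cast
          rw [e1, e2, e3]
          simp
        exact (ZMod.intCast_zmod_eq_zero_iff_dvd _ _).1 this
      have := u'_K (ll p₁ + ll p₂) (ll (p₁ + p₂) - (ll p₁ + ll p₂)) hk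
      rw [add_sub_cancel] at this
      exact this.symm
    rw [← h2, h1]
    abel
  rw [mem_twoCoboundaries_iff]
  refine ⟨gg, ?_⟩
  intro x y
  rw [Rep.trivial_ρ_apply]
  have hx : x = Multiplicative.ofAdd x.toAdd := rfl
  have hxy : (x * y).toAdd = x.toAdd + y.toAdd := rfl
  have : f.1 (x, y) = F (Multiplicative.ofAdd x.toAdd, Multiplicative.ofAdd y.toAdd) := rfl
  show gg y - gg (x * y) + gg x = f.1 (x, y)
  rw [this, key x.toAdd y.toAdd]
  show - u' (ll y.toAdd) - (- u' (ll ((x * y).toAdd))) + (- u' (ll x.toAdd)) = _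
  rw [hxy]
  abel

end Concrete

section Tensor
variable {P Q M' : Type} [AddCommGroup P] [AddCommGroup Q] [AddCommGroup M']

/-- Lift a biadditive map to the tensor product. -/
noncomputable def biaddHom (h : P → Q → M') (h1 : ∀ p p' q, h (p + p') q = h p q + h p' q)
    (h2 : ∀ p q q', h p (q + q') = h p q + h p q') : P ⊗[ℤ] Q →+ M' :=
  have hz2 : ∀ p, h p 0 = 0 := fun p => by
    have := h2 p 0 0; rw [add_zero] at this; exact (left_eq_add.1 this)
  have hz1 : ∀ q, h 0 q = 0 := fun q => by
    have := h1 0 0 q; rw [add_zero] at this; exact (left_eq_add.1 this)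
  (TensorProduct.lift (AddMonoidHom.toIntLinearMap
    { toFun := fun p => AddMonoidHom.toIntLinearMap
        { toFun := h p, map_zero' := hz2 p, map_add' := h2 p }
      map_zero' := by ext q; exact hz1 q
      map_add' := fun p p' => by ext q; exact h1 p p' q })).toAddMonoidHom

@[simp] lemma biaddHom_tmul (h : P → Q → M') (h1) (h2) (p : P) (q : Q) :
    biaddHom h h1 h2 (p ⊗ₜ[ℤ] q) = h p q := rfl

lemma addMonoidHom_tensor_ext {F1 F2 : P ⊗[ℤ] Q →+ M'}
    (h : ∀ p q, F1 (p ⊗ₜ[ℤ] q) = F2 (p ⊗ₜ[ℤ] q)) : F1 = F2 := by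
  apply DFunLike.ext
  intro t
  induction t using TensorProduct.induction_on with
  | zero => rw [map_zero, map_zero]
  | tmul p q => exact h p q
  | add s t hs ht => rw [map_add, map_add, hs, ht]

end Tensor

section Assembly
variable {r : ℕ} {n : Fin r → ℕ}

/-- The target group. -/
abbrev TT (r : ℕ) (n : Fin r → ℕ) :=
  ∀ p : {p : Fin r × Fin r // p.1 < p.2},
    (ZMod (n p.1.1) ⊗[ℤ] ZMod (n p.1.2)) →+ AddCircle (1 : ℚ)

lemma ee_zpow' (i : Fin r) (m : ℤ) : (ee (n := n) i 1) ^ m = ee i ((m : ZMod (n i))) := by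
  unfold ee
  rw [← ofAdd_zsmul]
  congr 1
  funext j
  rcases eq_or_ne j i with hj | hj
  · subst hj
    simp [zsmul_one]
  · simp [Pi.single_eq_of_ne hj]

lemma ee_eq_pow (i : Fin r) (a : ZMod (n i)) :
    ee (n := n) i a = (ee i 1) ^ ((ZMod.cast a : ℤ)) := by
  rw [ee_zpow']
  exact congrArg (ee i) (ZMod.intCast_zmod_cast a).symm

lemma ee_toAdd (i : Fin r) (a : ZMod (n i)) :
    (ee (n := n) i a).toAdd = Pi.single i a := rfl

/-- the cocycle attached to a family of pairings -/
noncomputable def fc (c : TT r n) : GG r n × GG r n → AddCircle (1 : ℚ) := fun x =>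
  ∑ p : {p : Fin r × Fin r // p.1 < p.2},
    c p ((x.1.toAdd p.1.1) ⊗ₜ[ℤ] (x.2.toAdd p.1.2))

lemma fc_add_left (c : TT r n) (x y z : GG r n) :
    fc c (x * y, z) = fc c (x, z) + fc c (y, z) := by
  unfold fc
  rw [← Finset.sum_add_distrib]
  refine Finset.sum_congr rfl fun p _ => ?_
  have : (x * y).toAdd p.1.1 = x.toAdd p.1.1 + y.toAdd p.1.1 := rfl
  rw [this, add_tmul, map_add]

lemma fc_add_right (c : TT r n) (x y z : GG r n) :
    fc c (x, y * z) = fc c (x, y) + fc c (x, z) := by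
  unfold fc
  rw [← Finset.sum_add_distrib]
  refine Finset.sum_congr rfl fun p _ => ?_
  have : (y * z).toAdd p.1.2 = y.toAdd p.1.2 + z.toAdd p.1.2 := rfl
  rw [this, tmul_add, map_add]

lemma fc_mem (c : TT r n) :
    fc c ∈ twoCocycles (Rep.trivial ℤ (GG r n) (AddCircle (1 : ℚ))) :=
  mem_twoCocycles_of_biadd (fc c) (fc_add_left c) (fc_add_right c)

lemma fc_ee_lt (c : TT r n) {i j : Fin r} (hij : i < j) (a : ZMod (n i)) (b : ZMod (n j)) :
    fc c (ee i a, ee j b) = c ⟨(i, j), hij⟩ (a ⊗ₜ[ℤ] b) := by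
  unfold fc
  rw [Finset.sum_eq_single (⟨(i, j), hij⟩ : {p : Fin r × Fin r // p.1 < p.2})]
  · have h1 : (ee (n := n) i a).toAdd i = a := by simp [ee_toAdd]
    have h2 : (ee (n := n) j b).toAdd j = b := by simp [ee_toAdd]
    show c ⟨(i, j), hij⟩ ((ee (n := n) i a).toAdd i ⊗ₜ[ℤ] (ee (n := n) j b).toAdd j)
      = c ⟨(i, j), hij⟩ (a ⊗ₜ[ℤ] b)
    rw [h1, h2]
  · intro q _ hq
    have hne : q.1.1 ≠ i ∨ q.1.2 ≠ j := by
      by_contra hcon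
      push_neg at hcon
      apply hq
      apply Subtype.ext
      exact Prod.ext hcon.1 hcon.2
    show c q ((ee (n := n) i a).toAdd q.1.1 ⊗ₜ[ℤ] (ee (n := n) j b).toAdd q.1.2) = 0
    rcases hne with hne | hne
    · have : (ee (n := n) i a).toAdd q.1.1 = 0 := by
        simp [ee_toAdd, Pi.single_eq_of_ne hne]
      rw [this, zero_tmul, map_zero]
    · have : (ee (n := n) j b).toAdd q.1.2 = 0 := by
        simp [ee_toAdd, Pi.single_eq_of_ne hne]
      rw [this, tmul_zero, map_zero]
  · intro h
    exact absurd (Finset.mem_univ _) h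

lemma fc_ee_not (c : TT r n) {i j : Fin r} (hij : ¬ i < j) (a : ZMod (n i)) (b : ZMod (n j)) :
    fc c (ee i a, ee j b) = 0 := by
  unfold fc
  apply Finset.sum_eq_zero
  intro q _
  show c q ((ee (n := n) i a).toAdd q.1.1 ⊗ₜ[ℤ] (ee (n := n) j b).toAdd q.1.2) = 0
  rcases eq_or_ne q.1.1 i with h1 | h1
  · have h2 : q.1.2 ≠ j := by
      intro h2
      exact hij (h1 ▸ h2 ▸ q.2)
    have : (ee (n := n) j b).toAdd q.1.2 = 0 := by
      simp [ee_toAdd, Pi.single_eq_of_ne h2]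
    rw [this, tmul_zero, map_zero]
  · have : (ee (n := n) i a).toAdd q.1.1 = 0 := by
      simp [ee_toAdd, Pi.single_eq_of_ne h1]
    rw [this, zero_tmul, map_zero]

local notation "Arep" => Rep.trivial ℤ (GG r n) (AddCircle (1 : ℚ))

lemma bb_zpow_left (f : twoCocycles Arep) (x y : GG r n) (m : ℤ) :
    bb f.1 (x ^ m) y = m • bb f.1 x y := by
  exact mulAdd_zpow (β := fun x => bb f.1 x y) (fun x x' => bb_add_left f x x' y) x m

lemma bb_zpow_right (f : twoCocycles Arep) (x y : GG r n) (m : ℤ) :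
    bb f.1 x (y ^ m) = m • bb f.1 x y := by
  exact mulAdd_zpow (β := fun y => bb f.1 x y) (fun y y' => bb_add_right f x y y') y m

lemma bb_ee_same (f : twoCocycles Arep) (i : Fin r) (a b : ZMod (n i)) :
    bb f.1 (ee i a) (ee i b) = 0 := by
  rw [ee_eq_pow i a, ee_eq_pow i b, bb_zpow_left, bb_zpow_right]
  have : bb f.1 (ee (n := n) i 1) (ee i 1) = 0 := sub_self _
  rw [this, smul_zero, smul_zero]

/-- The forward map on cocycles. -/
noncomputable def psi0 (f : twoCocycles Arep) : TT r n := fun p =>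
  biaddHom (fun a b => bb f.1 (ee p.1.1 a) (ee p.1.2 b))
    (fun a a' b => by
      show bb f.1 (ee p.1.1 (a + a')) (ee p.1.2 b) = _
      rw [ee_mul]
      exact bb_add_left f _ _ _)
    (fun a b b' => by
      show bb f.1 (ee p.1.1 a) (ee p.1.2 (b + b')) = _
      rw [ee_mul]
      exact bb_add_right f _ _ _)

lemma bb_fc_eq (f : twoCocycles Arep) (x y : GG r n) :
    bb (fc (psi0 f)) x y = bb f.1 x y := by
  have gen : ∀ (i : Fin r) (a : ZMod (n i)) (j : Fin r) (b : ZMod (n j)),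
      bb (fc (psi0 f)) (ee i a) (ee j b) = bb f.1 (ee i a) (ee j b) := by
    intro i a j b
    rcases lt_trichotomy i j with hij | hij | hij
    · unfold bb
      rw [fc_ee_lt (psi0 f) hij, fc_ee_not (psi0 f) (lt_asymm hij)]
      rw [sub_zero]
      rfl
    · subst hij
      rw [bb_ee_same]
      unfold bb
      rw [fc_ee_not (psi0 f) (lt_irrefl i), fc_ee_not (psi0 f) (lt_irrefl i), sub_zero]
    · rw [bb_neg, bb_neg f.1 (ee i a)]
      congr 1
      unfold bb
      rw [fc_ee_lt (psi0 f) hij, fc_ee_not (psi0 f) (lt_asymm hij)]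
      rw [sub_zero]
      rfl
  have step1 : ∀ (i : Fin r) (a : ZMod (n i)) (y : GG r n),
      bb (fc (psi0 f)) (ee i a) y = bb f.1 (ee i a) y := by
    intro i a y
    refine gen_ext (β₁ := fun y => bb (fc (psi0 f)) (ee i a) y)
      (β₂ := fun y => bb f.1 (ee i a) y) ?_ ?_ ?_ y
    · intro x' y'
      exact bb_add_right (⟨fc (psi0 f), fc_mem (psi0 f)⟩ : twoCocycles Arep) (ee i a) x' y'
    · intro x' y'
      exact bb_add_right f (ee i a) x' y'
    · intro j b
      exact gen i a j b
  refine gen_ext (β₁ := fun x => bb (fc (psi0 f)) x y) (β₂ := fun x => bb f.1 x y) ?_ ?_ ?_ x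
  · intro x' y'
    exact bb_add_left (⟨fc (psi0 f), fc_mem (psi0 f)⟩ : twoCocycles Arep) x' y' y
  · intro x' y'
    exact bb_add_left f x' y' y
  · intro i a
    exact step1 i a y

/-- the forward map, as a linear map on cocycles -/
noncomputable def psiLin : twoCocycles Arep →ₗ[ℤ] TT r n :=
  AddMonoidHom.toIntLinearMap
    { toFun := psi0
      map_zero' := by
        funext p
        apply addMonoidHom_tensor_ext
        intro a b
        show bb (0 : twoCocycles Arep).1 (ee p.1.1 a) (ee p.1.2 b) = (0 : AddCircle (1 : ℚ))
        unfold bb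
        rw [show ((0 : twoCocycles Arep).1 : GG r n × GG r n → AddCircle (1 : ℚ)) = 0 from rfl]
        simp
      map_add' := by
        intro f g
        funext p
        apply addMonoidHom_tensor_ext
        intro a b
        show bb (f + g).1 (ee p.1.1 a) (ee p.1.2 b)
          = bb f.1 (ee p.1.1 a) (ee p.1.2 b) + bb g.1 (ee p.1.1 a) (ee p.1.2 b)
        unfold bb
        rw [show ((f + g).1 : GG r n × GG r n → AddCircle (1 : ℚ)) = f.1 + g.1 from rfl]
        rw [Pi.add_apply, Pi.add_apply]
        abel }

lemma psiLin_apply (f : twoCocycles Arep) : psiLin f = psi0 f := rfl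

/-- the forward map on H² -/
noncomputable def Psi : (twoCocycles Arep ⧸ twoCoboundaries Arep) →ₗ[ℤ] TT r n :=
  Submodule.liftQ (twoCoboundaries Arep) psiLin (by
    intro f hf
    show psiLin f = 0
    rw [psiLin_apply]
    funext p
    apply addMonoidHom_tensor_ext
    intro a b
    show bb f.1 (ee p.1.1 a) (ee p.1.2 b) = 0
    exact bb_of_coboundary f hf _ _)

lemma sub_symm (f : twoCocycles Arep) :
    (⟨fc (psi0 f), fc_mem _⟩ : twoCocycles Arep) - f ∈ twoCoboundaries Arep := by
  apply symm_mem_twoCoboundaries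
  intro x y
  let F : GG r n × GG r n → AddCircle (1 : ℚ) := f.1
  show fc (psi0 f) (x, y) - F (x, y) = fc (psi0 f) (y, x) - F (y, x)
  have h2 : fc (psi0 f) (x, y) - fc (psi0 f) (y, x) = F (x, y) - F (y, x) := bb_fc_eq f x y
  rw [sub_eq_sub_iff_sub_eq_sub] at h2
  exact h2

end Assembly

end Stmt7

open TensorProduct

set_option maxHeartbeats 1000000 in
/-- If `π = ⊕_{i=1}^r ℤ/n_iℤ` (with `n_i = 0` meaning `ℤ`), then
`H²(π, ℚ/ℤ) ≅ ⊕_{i < j} Hom(ℤ/n_iℤ ⊗_ℤ ℤ/n_jℤ, ℚ/ℤ)` (trivial action). -/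
theorem stmt7 (r : ℕ) (n : Fin r → ℕ) :
    Nonempty
      (groupCohomology.H2
        (Rep.trivial ℤ (Multiplicative (∀ i : Fin r, ZMod (n i))) (AddCircle (1 : ℚ))) ≃+
      (∀ p : {p : Fin r × Fin r // p.1 < p.2},
        (ZMod (n p.1.1) ⊗[ℤ] ZMod (n p.1.2)) →+ AddCircle (1 : ℚ))) := by
  refine ⟨(Stmt7.H2equiv _).symm.trans
          { toFun := Stmt7.Psi (r := r) (n := n),
            invFun := fun c => Submodule.Quotient.mk ⟨Stmt7.fc c, Stmt7.fc_mem c⟩,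
            left_inv := ?_, right_inv := ?_, map_add' := map_add _ }⟩
  · intro x
    obtain ⟨f, rfl⟩ := Submodule.Quotient.mk_surjective _ x
    have hPsi : Stmt7.Psi (Submodule.Quotient.mk f) = Stmt7.psi0 f :=
      Submodule.liftQ_apply _ _ f
    rw [hPsi]
    rw [Submodule.Quotient.eq]
    exact Stmt7.sub_symm f
  · intro c
    have hPsi : Stmt7.Psi (Submodule.Quotient.mk ⟨Stmt7.fc c, Stmt7.fc_mem c⟩)
        = Stmt7.psi0 ⟨Stmt7.fc c, Stmt7.fc_mem c⟩ := Submodule.liftQ_apply _ _ _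
    rw [hPsi]
    funext p
    apply Stmt7.addMonoidHom_tensor_ext
    intro a b
    show Stmt7.bb (Stmt7.fc c) (Stmt7.ee p.1.1 a) (Stmt7.ee p.1.2 b) = c p (a ⊗ₜ[ℤ] b)
    unfold Stmt7.bb
    rw [Stmt7.fc_ee_lt c p.2, Stmt7.fc_ee_not c (lt_asymm p.2), sub_zero]
end
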